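/- For every finite family of closed walks in the counterexample graph G, each starting and ending at vertex 1, whose traversed edges collectively include all five edges {1,2}, {2,3}, {3,4}, {1,4}, {1,3}, the sum of the lengths of the walks is at least 6. -/

import Mathlib

/-- The counterexample graph of the paper's Theorem 2: the 4-cycle `0-1-2-3-0` together
with the chord `{0,2}` (vertices `0,1,2,3` stand for the paper's vertices `1,2,3,4`;
the depot is vertex `0`; the missing edge `{1,3}` is the paper's `{2,4}`). -/
def CG : SimpleGraph (Fin 4) where
  Adj a b := a ≠ b ∧ s(a, b) ≠ s(1, 3)
  symm := by
    constructor
    intro a b h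
    exact ⟨h.1.symm, by rw [Sym2.eq_swap]; exact h.2⟩
  loopless := by
    constructor
    intro a h
    exact h.1 rfl

instance : DecidableRel CG.Adj := fun a b =>
  decidable_of_iff (a ≠ b ∧ s(a, b) ≠ s(1, 3)) Iff.rfl

lemma walk_parity (x : Fin 4) {u v : Fin 4} (p : CG.Walk u v) :
    (p.edges.countP (fun e => decide (x ∈ e))) % 2
      = if (x = u) ↔ (x = v) then 0 else 1 := by
  induction p with
  | nil => simp
  | @cons u w v h q ih =>
    have huw : u ≠ w := h.1
    simp only [SimpleGraph.Walk.edges_cons, List.countP_cons]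
    have hx : (if decide (x ∈ s(u, w)) = true then 1 else 0)
        = if x = u ∨ x = w then 1 else 0 := by
      simp [Sym2.mem_iff]
    rw [hx]
    by_cases h1 : x = u <;> by_cases h2 : x = w <;> by_cases h3 : x = v <;>
      · subst_vars
        simp_all only [ne_eq, not_true_eq_false, not_false_eq_true,
          eq_self_iff_true, iff_true, true_iff, iff_false, false_iff,
          if_true, if_false, true_or, or_true, or_false, false_or,
          if_pos, or_self]
        try omega

lemma countP_finset_sum {ι α : Type*} (s : Finset ι) (f : ι → Multiset α)
    (p : α → Prop) [DecidablePred p] :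
    Multiset.countP p (∑ i ∈ s, f i) = ∑ i ∈ s, Multiset.countP p (f i) := by
  classical
  induction s using Finset.cons_induction with
  | empty => simp
  | cons a s ha ih => rw [Finset.sum_cons, Finset.sum_cons, Multiset.countP_add, ih]

lemma card_finset_sum {ι α : Type*} (s : Finset ι) (f : ι → Multiset α) :
    Multiset.card (∑ i ∈ s, f i) = ∑ i ∈ s, Multiset.card (f i) := by
  classical
  induction s using Finset.cons_induction with
  | empty => simp
  | cons a s ha ih => simp [Finset.sum_cons, ih]

/-- Every finite family of closed walks at the depot (vertex `0`, the paper's vertex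
`1`) that collectively traverses all five edges `{1,2}`, `{2,3}`, `{3,4}`, `{1,4}`,
`{1,3}` of the paper (here `{0,1}`, `{1,2}`, `{2,3}`, `{0,3}`, `{0,2}`) has total
length at least `6`. -/
theorem counterexample_cover_all_edges_total_length_ge_six
    (R : ℕ) (walk : Fin R → CG.Walk 0 0)
    (h01 : ∃ r, s(0, 1) ∈ (walk r).edges)
    (h12 : ∃ r, s(1, 2) ∈ (walk r).edges)
    (h23 : ∃ r, s(2, 3) ∈ (walk r).edges)
    (h03 : ∃ r, s(0, 3) ∈ (walk r).edges)
    (h02 : ∃ r, s(0, 2) ∈ (walk r).edges) :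
    6 ≤ ∑ r, (walk r).length := by
  classical
  set S : Multiset (Sym2 (Fin 4)) := ∑ r, ((walk r).edges : Multiset (Sym2 (Fin 4))) with hS
  have hmem : ∀ e : Sym2 (Fin 4), (∃ r, e ∈ (walk r).edges) → e ∈ S := by
    intro e ⟨r, hr⟩
    rw [hS, Multiset.mem_sum]
    exact ⟨r, Finset.mem_univ r, hr⟩
  -- total length is card of S
  have hcard : Multiset.card S = ∑ r, (walk r).length := by
    rw [hS, card_finset_sum]
    simp [SimpleGraph.Walk.length_edges]
  -- count of edges containing 2
  set p : Sym2 (Fin 4) → Prop := fun e => (2 : Fin 4) ∈ e with hp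
  have hsplit : Multiset.countP p S + Multiset.countP (fun e => ¬ p e) S
      = Multiset.card S := by
    rw [Multiset.countP_eq_card_filter, Multiset.countP_eq_card_filter,
      ← Multiset.card_add, Multiset.filter_add_not]
  -- countP p S is even
  have heven : Even (Multiset.countP p S) := by
    rw [hS, countP_finset_sum]
    apply Finset.even_sum
    intro r _
    have := walk_parity 2 (walk r)
    rw [Multiset.coe_countP]
    simp only [iff_self, if_true] at this
    rw [Nat.even_iff]
    simpa using this
  -- countP p S ≥ 3
  have h3 : 3 ≤ Multiset.countP p S := by
    rw [Multiset.countP_eq_card_filter]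
    have hsub : ({s(1, 2), s(2, 3), s(0, 2)} : Finset (Sym2 (Fin 4)))
        ⊆ (Multiset.filter p S).toFinset := by
      intro e he
      rw [Multiset.mem_toFinset, Multiset.mem_filter]
      fin_cases he
      · exact ⟨hmem _ h12, by rw [hp]; decide⟩
      · exact ⟨hmem _ h23, by rw [hp]; decide⟩
      · exact ⟨hmem _ h02, by rw [hp]; decide⟩
    calc 3 = ({s(1, 2), s(2, 3), s(0, 2)} : Finset (Sym2 (Fin 4))).card := by decide
    _ ≤ (Multiset.filter p S).toFinset.card := Finset.card_le_card hsub
    _ ≤ Multiset.card (Multiset.filter p S) := Multiset.toFinset_card_le _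
  -- countP ¬p S ≥ 2
  have h2 : 2 ≤ Multiset.countP (fun e => ¬ p e) S := by
    rw [Multiset.countP_eq_card_filter]
    have hsub : ({s(0, 1), s(0, 3)} : Finset (Sym2 (Fin 4)))
        ⊆ (Multiset.filter (fun e => ¬ p e) S).toFinset := by
      intro e he
      rw [Multiset.mem_toFinset, Multiset.mem_filter]
      fin_cases he
      · exact ⟨hmem _ h01, by rw [hp]; decide⟩
      · exact ⟨hmem _ h03, by rw [hp]; decide⟩
    calc 2 = ({s(0, 1), s(0, 3)} : Finset (Sym2 (Fin 4))).card := by decide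
    _ ≤ (Multiset.filter (fun e => ¬ p e) S).toFinset.card := Finset.card_le_card hsub
    _ ≤ Multiset.card (Multiset.filter (fun e => ¬ p e) S) := Multiset.toFinset_card_le _
  obtain ⟨k, hk⟩ := heven
  omega
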